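/- arXiv:1712.09167 — 2 statements merged into one kernel-verified Lean document; each statement's English description precedes it below -/
import Mathlib

section
/- For any tripartite density operator ρ_ABC, C^{AB|C}_{l1}(ρ_ABC) ≥ C^{A|C}_{l1}(ρ_AC) + C^{B|C}_{l1}(ρ_BC), where ρ_AC = Tr_B ρ_ABC and ρ_BC = Tr_A ρ_ABC (monogamy of the l1 IQ coherence). -/
open scoped BigOperators ComplexOrder Kronecker

/-- Trace norm: `‖P‖_tr = Tr √(Pᴴ P)`. -/
noncomputable def traceNorm {n : Type*} [Fintype n] [DecidableEq n] (P : Matrix n n ℂ) : ℝ :=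
  (((Matrix.posSemidef_conjTranspose_mul_self P).1.eigenvectorUnitary.1 *
    Matrix.diagonal (((↑) : ℝ → ℂ) ∘ (√·) ∘ (Matrix.posSemidef_conjTranspose_mul_self P).1.eigenvalues) *
    (star (Matrix.posSemidef_conjTranspose_mul_self P).1.eigenvectorUnitary : Matrix n n ℂ)).trace).re

/-- The blocks of an operator on H_X ⊗ H_Y with respect to a basis of X. -/
def blockB {X Y : Type*} (Q : Matrix (X × Y) (X × Y) ℂ) (i j : X) : Matrix Y Y ℂ :=
  fun b b' => Q (i, b) (j, b')

/-- l1 norm of IQ coherence C^{X|Y}_{l1}(ρ) = Σ_{i≠j} ‖ρ^Y_{ij}‖_tr. -/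
noncomputable def CIQl1 {X Y : Type*} [Fintype X] [Fintype Y] [DecidableEq X] [DecidableEq Y]
    (ρ : Matrix (X × Y) (X × Y) ℂ) : ℝ :=
  ∑ i, ∑ j, if i = j then 0 else traceNorm (blockB ρ i j)

section Aux

open Matrix

variable {n : Type*} [Fintype n] [DecidableEq n]

/-- Trace norm as the sum of the square roots of the eigenvalues of `PᴴP`. -/
lemma traceNorm_eq_sum (A : Matrix n n ℂ) :
    traceNorm A =
      ∑ i, Real.sqrt ((Matrix.posSemidef_conjTranspose_mul_self A).1.eigenvalues i) := by
  have h1 : (star ((Matrix.posSemidef_conjTranspose_mul_self A).1.eigenvectorUnitary :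
      Matrix n n ℂ)) * ((Matrix.posSemidef_conjTranspose_mul_self A).1.eigenvectorUnitary :
      Matrix n n ℂ) = 1 :=
    Matrix.mem_unitaryGroup_iff'.mp
      (Matrix.posSemidef_conjTranspose_mul_self A).1.eigenvectorUnitary.2
  rw [traceNorm, Matrix.trace_mul_cycle, h1,
    one_mul, Matrix.trace_diagonal]
  rw [Complex.re_sum]
  simp

lemma traceNorm_nonneg (A : Matrix n n ℂ) : 0 ≤ traceNorm A := by
  rw [traceNorm_eq_sum]
  exact Finset.sum_nonneg fun i _ => Real.sqrt_nonneg _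

/-- Cauchy–Schwarz for the complex dot product. -/
lemma re_dot_le_sqrt_mul_sqrt (x y : n → ℂ) :
    (dotProduct (star x) y).re ≤
      Real.sqrt ((dotProduct (star x) x).re) *
        Real.sqrt ((dotProduct (star y) y).re) := by
  have hx := (EuclideanSpace.inner_toLp_toLp (𝕜 := ℂ) (ι := n) x y).trans (dotProduct_comm _ _)
  have hxx := (EuclideanSpace.inner_toLp_toLp (𝕜 := ℂ) (ι := n) x x).trans (dotProduct_comm _ _)
  have hyy := (EuclideanSpace.inner_toLp_toLp (𝕜 := ℂ) (ι := n) y y).trans (dotProduct_comm _ _)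
  set x' : EuclideanSpace ℂ n := WithLp.toLp 2 x
  set y' : EuclideanSpace ℂ n := WithLp.toLp 2 y
  have hnx : Real.sqrt ((dotProduct (star x) x).re) = ‖x'‖ := by
    rw [← hxx]
    have : (inner ℂ x' x' : ℂ).re = ‖x'‖ ^ 2 := by
      simpa using inner_self_eq_norm_sq (𝕜 := ℂ) x'
    rw [show ((inner ℂ x' x' : ℂ)).re = RCLike.re (inner ℂ x' x' : ℂ) from rfl] at this ⊢
    rw [this, Real.sqrt_sq (norm_nonneg _)]
  have hny : Real.sqrt ((dotProduct (star y) y).re) = ‖y'‖ := by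
    rw [← hyy]
    have : (inner ℂ y' y' : ℂ).re = ‖y'‖ ^ 2 := by
      simpa using inner_self_eq_norm_sq (𝕜 := ℂ) y'
    rw [show ((inner ℂ y' y' : ℂ)).re = RCLike.re (inner ℂ y' y' : ℂ) from rfl] at this ⊢
    rw [this, Real.sqrt_sq (norm_nonneg _)]
  rw [← hx, hnx, hny]
  calc (inner ℂ x' y' : ℂ).re ≤ ‖(inner ℂ x' y' : ℂ)‖ := Complex.re_le_norm _
    _ ≤ ‖x'‖ * ‖y'‖ := norm_inner_le_norm x' y'

lemma dot_shift (Cm B : Matrix n n ℂ) (u : n → ℂ) :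
    dotProduct (star (Cm *ᵥ u)) (B *ᵥ u) =
      dotProduct (star u) ((Cmᴴ * B) *ᵥ u) := by
  rw [Matrix.star_mulVec, ← Matrix.mulVec_mulVec, Matrix.dotProduct_mulVec,
    Matrix.dotProduct_mulVec, Matrix.dotProduct_mulVec]

lemma conj_entry (W M : Matrix n n ℂ) (i : n) :
    (Wᴴ * M * W) i i =
      dotProduct (star fun k => W k i) (M *ᵥ fun k => W k i) := by
  simp only [Matrix.mul_apply, Matrix.conjTranspose_apply, dotProduct, Matrix.mulVec,
    Pi.star_apply, Finset.sum_mul, Finset.mul_sum]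
  rw [Finset.sum_comm]
  refine Finset.sum_congr rfl fun k _ => Finset.sum_congr rfl fun l _ => by ring

/-- Any contraction `Cm` witnesses a lower bound for the trace norm. -/
lemma re_trace_le_traceNorm (Cm A : Matrix n n ℂ)
    (hC : ((1 : Matrix n n ℂ) - Cmᴴ * Cm).PosSemidef) :
    ((Cmᴴ * A).trace).re ≤ traceNorm A := by
  classical
  set hA := Matrix.posSemidef_conjTranspose_mul_self A with hAdef
  set W : Matrix n n ℂ := (hA.1.eigenvectorUnitary : Matrix n n ℂ) with hWdef
  have h1 : Wᴴ * W = 1 := by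
    simpa [Matrix.star_eq_conjTranspose] using
      Matrix.mem_unitaryGroup_iff'.mp hA.1.eigenvectorUnitary.2
  have h2 : W * Wᴴ = 1 := by
    simpa [Matrix.star_eq_conjTranspose] using
      Matrix.mem_unitaryGroup_iff.mp hA.1.eigenvectorUnitary.2
  have hspec : Wᴴ * (Aᴴ * A) * W =
      Matrix.diagonal (fun i => ((hA.1.eigenvalues i : ℝ) : ℂ)) := by
    have := hA.1.conjStarAlgAut_star_eigenvectorUnitary
    simp only [Unitary.conjStarAlgAut_apply, Unitary.coe_star, star_star] at this
    rw [Matrix.star_eq_conjTranspose] at this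
    exact this
  set u : n → n → ℂ := fun i k => W k i with hu
  have htr : ∀ M : Matrix n n ℂ,
      M.trace = ∑ i, dotProduct (star (u i)) (M *ᵥ u i) := by
    intro M
    have hMeq : (Wᴴ * M * W).trace = M.trace := by
      rw [Matrix.trace_mul_cycle, h2, one_mul]
    rw [← hMeq, Matrix.trace]
    exact Finset.sum_congr rfl fun i _ => conj_entry W M i
  -- key entrywise facts
  have hdiag1 : ∀ i, dotProduct (star (u i)) (u i) = 1 := by
    intro i
    have := conj_entry W 1 i
    rw [Matrix.mul_one, h1] at this
    simpa [Matrix.one_apply] using this.symm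
  have haa : ∀ i, (dotProduct (star (A *ᵥ u i)) (A *ᵥ u i)).re
      = hA.1.eigenvalues i := by
    intro i
    rw [dot_shift, ← conj_entry, hspec]
    simp
  have hcc : ∀ i, (dotProduct (star (Cm *ᵥ u i)) (Cm *ᵥ u i)).re ≤ 1 := by
    intro i
    have hpos := hC.dotProduct_mulVec_nonneg (u i)
    rw [Matrix.sub_mulVec, dotProduct_sub, Matrix.one_mulVec] at hpos
    have hre := (Complex.le_def.mp hpos).1
    rw [Complex.zero_re, Complex.sub_re] at hre
    have hle : (dotProduct (star (u i)) ((Cmᴴ * Cm) *ᵥ u i)).re ≤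
        (dotProduct (star (u i)) (u i)).re := by linarith
    calc (dotProduct (star (Cm *ᵥ u i)) (Cm *ᵥ u i)).re
        = (dotProduct (star (u i)) ((Cmᴴ * Cm) *ᵥ u i)).re := by rw [dot_shift]
      _ ≤ (dotProduct (star (u i)) (u i)).re := hle
      _ = 1 := by rw [hdiag1 i]; simp
  rw [htr, Complex.re_sum, traceNorm_eq_sum]
  refine Finset.sum_le_sum fun i _ => ?_
  have hterm : (dotProduct (star (u i)) ((Cmᴴ * A) *ᵥ u i)).re
      = (dotProduct (star (Cm *ᵥ u i)) (A *ᵥ u i)).re := by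
    rw [dot_shift]
  rw [hterm]
  calc (dotProduct (star (Cm *ᵥ u i)) (A *ᵥ u i)).re
      ≤ Real.sqrt ((dotProduct (star (Cm *ᵥ u i)) (Cm *ᵥ u i)).re) *
        Real.sqrt ((dotProduct (star (A *ᵥ u i)) (A *ᵥ u i)).re) :=
        re_dot_le_sqrt_mul_sqrt _ _
    _ ≤ 1 * Real.sqrt ((dotProduct (star (A *ᵥ u i)) (A *ᵥ u i)).re) := by
        apply mul_le_mul_of_nonneg_right _ (Real.sqrt_nonneg _)
        exact Real.sqrt_le_one.mpr (hcc i)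
    _ = Real.sqrt (hA.1.eigenvalues i) := by rw [one_mul, haa i]

/-- Polar-type witness achieving the trace norm. -/
lemma exists_polar (A : Matrix n n ℂ) :
    ∃ Cm : Matrix n n ℂ, ((1 : Matrix n n ℂ) - Cmᴴ * Cm).PosSemidef ∧
      ((Cmᴴ * A).trace).re = traceNorm A := by
  classical
  set hA := Matrix.posSemidef_conjTranspose_mul_self A with hAdef
  set W : Matrix n n ℂ := (hA.1.eigenvectorUnitary : Matrix n n ℂ) with hWdef
  have h1 : Wᴴ * W = 1 := by
    simpa [Matrix.star_eq_conjTranspose] using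
      Matrix.mem_unitaryGroup_iff'.mp hA.1.eigenvectorUnitary.2
  have h2 : W * Wᴴ = 1 := by
    simpa [Matrix.star_eq_conjTranspose] using
      Matrix.mem_unitaryGroup_iff.mp hA.1.eigenvectorUnitary.2
  set lam : n → ℝ := hA.1.eigenvalues with hlam
  have hspec : Wᴴ * (Aᴴ * A) * W = Matrix.diagonal (fun i => ((lam i : ℝ) : ℂ)) := by
    have := hA.1.conjStarAlgAut_star_eigenvectorUnitary
    simp only [Unitary.conjStarAlgAut_apply, Unitary.coe_star, star_star] at this
    rw [Matrix.star_eq_conjTranspose] at this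
    exact this
  have hlam0 : ∀ i, 0 ≤ lam i := fun i => hA.eigenvalues_nonneg i
  set g : n → ℂ := fun i => if lam i = 0 then 0 else ((Real.sqrt (lam i) : ℝ) : ℂ)⁻¹ with hg
  have hgstar : star g = g := by
    funext i
    simp only [hg, Pi.star_apply]
    split <;> simp [← Complex.ofReal_inv, Complex.conj_ofReal]
  set D : Matrix n n ℂ := Matrix.diagonal g with hD
  have hDstar : Dᴴ = D := by rw [hD, Matrix.diagonal_conjTranspose, hgstar]
  have hCt : (A * (W * D * Wᴴ))ᴴ = W * D * Wᴴ * Aᴴ := by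
    simp only [Matrix.conjTranspose_mul, Matrix.conjTranspose_conjTranspose, hDstar]
    noncomm_ring
  refine ⟨A * (W * D * Wᴴ), ?_, ?_⟩
  · have hkey : (A * (W * D * Wᴴ))ᴴ * (A * (W * D * Wᴴ)) =
        W * (D * Matrix.diagonal (fun i => ((lam i : ℝ) : ℂ)) * D) * Wᴴ := by
      rw [hCt, ← hspec]
      noncomm_ring
    have hDD : D * Matrix.diagonal (fun i => ((lam i : ℝ) : ℂ)) * D =
        Matrix.diagonal (fun i => g i * (lam i : ℂ) * g i) := by
      rw [hD, Matrix.diagonal_mul_diagonal, Matrix.diagonal_mul_diagonal]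
    have hsub : (1 : Matrix n n ℂ) - (A * (W * D * Wᴴ))ᴴ * (A * (W * D * Wᴴ)) =
        W * Matrix.diagonal (fun i => 1 - g i * (lam i : ℂ) * g i) * Wᴴ := by
      rw [hkey, hDD]
      rw [show Matrix.diagonal (fun i => 1 - g i * (lam i : ℂ) * g i) =
        1 - Matrix.diagonal (fun i => g i * (lam i : ℂ) * g i) by
          rw [← Matrix.diagonal_one, ← Matrix.diagonal_sub]]
      rw [Matrix.mul_sub, Matrix.sub_mul, Matrix.mul_one, h2]
    rw [hsub]
    have hdp : (Matrix.diagonal (fun i => 1 - g i * (lam i : ℂ) * g i)).PosSemidef := by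
      rw [Matrix.posSemidef_diagonal_iff]
      intro i
      by_cases h : lam i = 0
      · simp [hg, h]
      · have hs : Real.sqrt (lam i) ≠ 0 :=
          ne_of_gt (Real.sqrt_pos.mpr (lt_of_le_of_ne (hlam0 i) (Ne.symm h)))
        have hs' : ((Real.sqrt (lam i) : ℝ) : ℂ) ≠ 0 := by exact_mod_cast hs
        have hval : g i * (lam i : ℂ) * g i = 1 := by
          simp only [hg, if_neg h]
          rw [show ((lam i : ℝ) : ℂ) = ((Real.sqrt (lam i) * Real.sqrt (lam i) : ℝ) : ℂ) by
            rw [Real.mul_self_sqrt (hlam0 i)]]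
          push_cast
          field_simp
        rw [hval]
        simp
    simpa [Matrix.star_eq_conjTranspose] using hdp.mul_mul_conjTranspose_same W
  · have e2 : (A * (W * D * Wᴴ))ᴴ * A = W * D * (Wᴴ * (Aᴴ * A)) := by
      rw [hCt]; noncomm_ring
    rw [e2, Matrix.trace_mul_cycle, show Wᴴ * (Aᴴ * A) * W * D =
      (Wᴴ * (Aᴴ * A) * W) * D by noncomm_ring, hspec, Matrix.diagonal_mul_diagonal,
      Matrix.trace_diagonal, traceNorm_eq_sum, Complex.re_sum]
    refine Finset.sum_congr rfl fun i _ => ?_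
    have hev : (Matrix.posSemidef_conjTranspose_mul_self A).1.eigenvalues i = lam i := rfl
    rw [hev]
    by_cases h : lam i = 0
    · simp [hg, h]
    · have hs : Real.sqrt (lam i) ≠ 0 :=
        ne_of_gt (Real.sqrt_pos.mpr (lt_of_le_of_ne (hlam0 i) (Ne.symm h)))
      have hs' : ((Real.sqrt (lam i) : ℝ) : ℂ) ≠ 0 := by exact_mod_cast hs
      have hmul : ((lam i : ℝ) : ℂ) * g i = ((Real.sqrt (lam i) : ℝ) : ℂ) := by
        simp only [hg, if_neg h]
        rw [show ((lam i : ℝ) : ℂ) = ((Real.sqrt (lam i) * Real.sqrt (lam i) : ℝ) : ℂ) by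
          rw [Real.mul_self_sqrt (hlam0 i)]]
        push_cast
        field_simp
      rw [hmul]
      simp

/-- Triangle inequality for the trace norm of a finite sum. -/
lemma traceNorm_sum_le {ι : Type*} (s : Finset ι) (f : ι → Matrix n n ℂ) :
    traceNorm (∑ i ∈ s, f i) ≤ ∑ i ∈ s, traceNorm (f i) := by
  obtain ⟨Cm, hC, hCt⟩ := exists_polar (∑ i ∈ s, f i)
  rw [← hCt, Finset.mul_sum, Matrix.trace_sum, Complex.re_sum]
  exact Finset.sum_le_sum fun i _ => re_trace_le_traceNorm Cm (f i) hC

end Aux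

/-- monogamy: C^{AB|C}_{l1}(ρ_ABC) ≥ C^{A|C}_{l1}(ρ_AC) + C^{B|C}_{l1}(ρ_BC),
where ρ_AC = Tr_B ρ_ABC and ρ_BC = Tr_A ρ_ABC. -/
theorem CIQl1_monogamy {A B C : Type*} [Fintype A] [Fintype B] [Fintype C]
    [DecidableEq A] [DecidableEq B] [DecidableEq C]
    (ρ : Matrix ((A × B) × C) ((A × B) × C) ℂ) (hρ : ρ.PosSemidef) (hTr : ρ.trace = 1) :
    CIQl1 ρ ≥
      CIQl1 ((Matrix.of fun p q =>
        ∑ m : B, ρ ((p.1, m), p.2) ((q.1, m), q.2)) : Matrix (A × C) (A × C) ℂ) +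
      CIQl1 ((Matrix.of fun p q =>
        ∑ i : A, ρ ((i, p.1), p.2) ((i, q.1), q.2)) : Matrix (B × C) (B × C) ℂ) := by
  classical
  rw [ge_iff_le]
  -- bound for the AC part
  have hAC : CIQl1 ((Matrix.of fun p q =>
        ∑ m : B, ρ ((p.1, m), p.2) ((q.1, m), q.2)) : Matrix (A × C) (A × C) ℂ) ≤
      ∑ i : A, ∑ j : A, if i = j then 0 else
        ∑ m : B, traceNorm (blockB ρ (i, m) (j, m)) := by
    refine Finset.sum_le_sum fun i _ => Finset.sum_le_sum fun j _ => ?_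
    by_cases hij : i = j
    · simp [hij]
    · simp only [if_neg hij]
      have hb : blockB ((Matrix.of fun p q =>
          ∑ m : B, ρ ((p.1, m), p.2) ((q.1, m), q.2)) : Matrix (A × C) (A × C) ℂ) i j =
          ∑ m : B, blockB ρ (i, m) (j, m) := by
        ext b b'
        simp [blockB, Matrix.sum_apply]
      rw [hb]
      exact traceNorm_sum_le Finset.univ _
  -- bound for the BC part
  have hBC : CIQl1 ((Matrix.of fun p q =>
        ∑ i : A, ρ ((i, p.1), p.2) ((i, q.1), q.2)) : Matrix (B × C) (B × C) ℂ) ≤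
      ∑ m : B, ∑ n : B, if m = n then 0 else
        ∑ i : A, traceNorm (blockB ρ (i, m) (i, n)) := by
    refine Finset.sum_le_sum fun m _ => Finset.sum_le_sum fun n _ => ?_
    by_cases hmn : m = n
    · simp [hmn]
    · simp only [if_neg hmn]
      have hb : blockB ((Matrix.of fun p q =>
          ∑ i : A, ρ ((i, p.1), p.2) ((i, q.1), q.2)) : Matrix (B × C) (B × C) ℂ) m n =
          ∑ i : A, blockB ρ (i, m) (i, n) := by
        ext b b'
        simp [blockB, Matrix.sum_apply]
      rw [hb]
      exact traceNorm_sum_le Finset.univ _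
  -- combinatorial part
  set G1 : (A × B) → (A × B) → ℝ := fun p q =>
    if p.2 = q.2 then (if p.1 = q.1 then 0 else traceNorm (blockB ρ p q)) else 0 with hG1
  set G2 : (A × B) → (A × B) → ℝ := fun p q =>
    if p.1 = q.1 then (if p.2 = q.2 then 0 else traceNorm (blockB ρ p q)) else 0 with hG2
  have e1 : ∀ (i : A) (m : B), (∑ q : A × B, G1 (i, m) q) =
      ∑ j : A, (if i = j then 0 else traceNorm (blockB ρ (i, m) (j, m))) := by
    intro i m
    rw [Fintype.sum_prod_type]
    refine Finset.sum_congr rfl fun j _ => ?_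
    simp [hG1]
  have e2 : ∀ (i : A) (m : B), (∑ q : A × B, G2 (i, m) q) =
      ∑ n : B, (if m = n then 0 else traceNorm (blockB ρ (i, m) (i, n))) := by
    intro i m
    rw [Fintype.sum_prod_type, Finset.sum_comm]
    refine Finset.sum_congr rfl fun n _ => ?_
    simp [hG2]
  have hsum1 : (∑ i : A, ∑ j : A, if i = j then 0 else
      ∑ m : B, traceNorm (blockB ρ (i, m) (j, m))) = ∑ p : A × B, ∑ q : A × B, G1 p q := by
    calc (∑ i : A, ∑ j : A, if i = j then 0 else ∑ m : B, traceNorm (blockB ρ (i, m) (j, m)))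
        = ∑ i : A, ∑ j : A, ∑ m : B,
            (if i = j then 0 else traceNorm (blockB ρ (i, m) (j, m))) := by
          refine Finset.sum_congr rfl fun i _ => Finset.sum_congr rfl fun j _ => ?_
          by_cases hij : i = j <;> simp [hij]
      _ = ∑ i : A, ∑ m : B, ∑ j : A,
            (if i = j then 0 else traceNorm (blockB ρ (i, m) (j, m))) := by
          exact Finset.sum_congr rfl fun i _ => Finset.sum_comm
      _ = ∑ p : A × B, ∑ q : A × B, G1 p q := by
          rw [Fintype.sum_prod_type]
          exact Finset.sum_congr rfl fun i _ => Finset.sum_congr rfl fun m _ => (e1 i m).symm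
  have hsum2 : (∑ m : B, ∑ n : B, if m = n then 0 else
      ∑ i : A, traceNorm (blockB ρ (i, m) (i, n))) = ∑ p : A × B, ∑ q : A × B, G2 p q := by
    calc (∑ m : B, ∑ n : B, if m = n then 0 else ∑ i : A, traceNorm (blockB ρ (i, m) (i, n)))
        = ∑ m : B, ∑ n : B, ∑ i : A,
            (if m = n then 0 else traceNorm (blockB ρ (i, m) (i, n))) := by
          refine Finset.sum_congr rfl fun m _ => Finset.sum_congr rfl fun n _ => ?_
          by_cases hmn : m = n <;> simp [hmn]
      _ = ∑ m : B, ∑ i : A, ∑ n : B,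
            (if m = n then 0 else traceNorm (blockB ρ (i, m) (i, n))) := by
          exact Finset.sum_congr rfl fun m _ => Finset.sum_comm
      _ = ∑ i : A, ∑ m : B, ∑ n : B,
            (if m = n then 0 else traceNorm (blockB ρ (i, m) (i, n))) := Finset.sum_comm
      _ = ∑ p : A × B, ∑ q : A × B, G2 p q := by
          rw [Fintype.sum_prod_type]
          exact Finset.sum_congr rfl fun i _ => Finset.sum_congr rfl fun m _ => (e2 i m).symm
  have hfinal : (∑ p : A × B, ∑ q : A × B, G1 p q) + (∑ p : A × B, ∑ q : A × B, G2 p q) ≤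
      CIQl1 ρ := by
    rw [CIQl1, ← Finset.sum_add_distrib]
    refine Finset.sum_le_sum fun p _ => ?_
    rw [← Finset.sum_add_distrib]
    refine Finset.sum_le_sum fun q _ => ?_
    by_cases h1 : p.1 = q.1 <;> by_cases h2 : p.2 = q.2
    · have hpq : p = q := Prod.ext h1 h2
      simp [hG1, hG2, h1, h2, hpq]
    · have hpq : p ≠ q := fun h => h2 (by rw [h])
      simp [hG1, hG2, h1, h2, hpq]
    · have hpq : p ≠ q := fun h => h1 (by rw [h])
      simp [hG1, hG2, h1, h2, hpq]
    · have hpq : p ≠ q := fun h => h1 (by rw [h])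
      simp only [hG1, hG2, if_neg h1, if_neg h2, if_neg hpq, add_zero]
      exact traceNorm_nonneg _
  calc _ ≤ (∑ p : A × B, ∑ q : A × B, G1 p q) + (∑ p : A × B, ∑ q : A × B, G2 p q) := by
        rw [← hsum1, ← hsum2]; exact add_le_add hAC hBC
    _ ≤ CIQl1 ρ := hfinal
end

section
/- There exists a tripartite density operator ρ_ABC with C^{A|BC}_r(ρ_ABC) < C^{A|B}_r(ρ_AB) + C^{A|C}_r(ρ_AC); in particular, any state of the form ρ_ABC = ρ_{A1 B} ⊗ ρ_{A2 C} with H_A = H_{A1} ⊗ H_{A2}, where both factors have nonzero IQ coherence, violates the would-be monogamy relation. -/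
open scoped BigOperators ComplexOrder Kronecker

/-- Von Neumann entropy S(ρ) = −Tr ρ log ρ, via the eigenvalues of a Hermitian matrix
(junk value 0 for non-Hermitian input). -/
noncomputable def vN {n : Type*} [Fintype n] [DecidableEq n] (ρ : Matrix n n ℂ) : ℝ :=
  if h : ρ.IsHermitian then -∑ i, h.eigenvalues i * Real.log (h.eigenvalues i) else 0

/-- Dephasing channel Δ_A on the A-factor of H_A ⊗ H_B (in the fixed basis of A). -/
def dephA {A B : Type*} [DecidableEq A] (ρ : Matrix (A × B) (A × B) ℂ) :
    Matrix (A × B) (A × B) ℂ :=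
  fun p q => if p.1 = q.1 then ρ p q else 0

/-- Relative entropy of IQ coherence, C^{A|B}_r(ρ) = S(Δ_A(ρ)) − S(ρ). -/
noncomputable def CrIQ {A B : Type*} [Fintype A] [Fintype B] [DecidableEq A] [DecidableEq B]
    (ρ : Matrix (A × B) (A × B) ℂ) : ℝ :=
  vN (dephA ρ) - vN ρ

section everything
open Matrix

section helper

variable {n : Type*} [Fintype n] [DecidableEq n]

lemma eig_mem {M : Matrix n n ℂ} (hM : M.IsHermitian) (c : ℝ)
    (hsq : M * M = (c : ℂ) • M) (i : n) :
    hM.eigenvalues i = 0 ∨ hM.eigenvalues i = c := by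
  set l := hM.eigenvalues i with hl
  have hv := hM.mulVec_eigenvectorBasis i
  have hne : ⇑(hM.eigenvectorBasis i) ≠ 0 := by
    intro h
    exact hM.eigenvectorBasis.orthonormal.ne_zero i (by ext j; exact congrFun h j)
  have hlc : M *ᵥ ⇑(hM.eigenvectorBasis i) = (l : ℂ) • ⇑(hM.eigenvectorBasis i) := by
    rw [hv]; ext j; simp [Complex.real_smul]; exact Or.inl rfl
  have e1 : (M * M) *ᵥ ⇑(hM.eigenvectorBasis i)
      = ((l : ℂ) * l) • ⇑(hM.eigenvectorBasis i) := by
    rw [← Matrix.mulVec_mulVec, hlc, Matrix.mulVec_smul, hlc, smul_smul]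
  have e2 : (M * M) *ᵥ ⇑(hM.eigenvectorBasis i)
      = ((c : ℂ) * l) • ⇑(hM.eigenvectorBasis i) := by
    rw [hsq, Matrix.smul_mulVec, hlc, smul_smul]
  have h3 : ((l : ℂ) * l - (c : ℂ) * l) • ⇑(hM.eigenvectorBasis i) = 0 := by
    rw [sub_smul, ← e1, ← e2, sub_self]
  have h4 : (l : ℂ) * l - (c : ℂ) * l = 0 := by
    rcases smul_eq_zero.mp h3 with h | h
    · exact h
    · exact absurd h hne
  have h5 : l * l - c * l = 0 := by exact_mod_cast h4
  rcases mul_eq_zero.mp (show (l - 0) * (l - c) = 0 by linear_combination h5) with h | h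
  · left; linarith
  · right; linarith

lemma trace_eq_sum_eig {M : Matrix n n ℂ} (hM : M.IsHermitian) :
    M.trace = ∑ i, (hM.eigenvalues i : ℂ) := by
  conv_lhs => rw [hM.spectral_theorem]
  rw [Unitary.conjStarAlgAut_apply]
  rw [Matrix.trace_mul_cycle]
  rw [show (star (hM.eigenvectorUnitary : Matrix n n ℂ)) * (hM.eigenvectorUnitary : Matrix n n ℂ)
      = 1 from Matrix.mem_unitaryGroup_iff'.mp hM.eigenvectorUnitary.2]
  simp [Matrix.trace_diagonal]

lemma vN_special {M : Matrix n n ℂ} (hM : M.IsHermitian) (c : ℝ)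
    (hsq : M * M = (c : ℂ) • M) (htr : M.trace = 1) : vN M = - Real.log c := by
  rw [vN, dif_pos hM]
  have hsum : ∑ i, hM.eigenvalues i = 1 := by
    have h := trace_eq_sum_eig hM
    rw [htr] at h
    exact_mod_cast h.symm
  have hterm : ∀ i, hM.eigenvalues i * Real.log (hM.eigenvalues i)
      = hM.eigenvalues i * Real.log c := by
    intro i
    rcases eig_mem hM c hsq i with h | h <;> rw [h] <;> simp
  rw [Finset.sum_congr rfl fun i _ => hterm i, ← Finset.sum_mul, hsum, one_mul]

variable (P : n → Prop) [DecidablePred P] (c : ℝ)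

noncomputable def indR : Matrix n n ℂ :=
  Matrix.of fun p q => (if P p then 1 else 0) * (if P q then 1 else 0) * ((c : ℝ) : ℂ)

noncomputable def indD : Matrix n n ℂ :=
  Matrix.of fun p q => if p = q ∧ P p then ((c : ℝ) : ℂ) else 0

lemma indR_herm : (indR P c).IsHermitian := by
  ext p q
  simp only [indR, Matrix.conjTranspose_apply, Matrix.of_apply]
  split_ifs <;> simp [mul_comm]

lemma indD_herm : (indD P c).IsHermitian := by
  ext p q
  simp only [indD, Matrix.conjTranspose_apply, Matrix.of_apply]
  have h : (q = p ∧ P q) ↔ (p = q ∧ P p) := by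
    constructor <;> rintro ⟨rfl, h⟩ <;> exact ⟨rfl, h⟩
  rw [apply_ite star]
  simp only [h, star_zero, RCLike.star_def, Complex.conj_ofReal]

lemma indR_trace : (indR P c).trace = ((Finset.univ.filter P).card : ℂ) * c := by
  have h : ∀ p, (if P p then (1:ℂ) else 0) * (if P p then 1 else 0) * ((c:ℝ):ℂ)
      = if P p then ((c:ℝ):ℂ) else 0 := by intro p; split_ifs <;> ring
  simp only [Matrix.trace, Matrix.diag, indR, Matrix.of_apply, h]
  rw [Finset.sum_ite, Finset.sum_const, Finset.sum_const_zero, add_zero, nsmul_eq_mul]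

lemma indD_trace : (indD P c).trace = ((Finset.univ.filter P).card : ℂ) * c := by
  have h : ∀ p : n, (if p = p ∧ P p then ((c:ℝ):ℂ) else 0) = if P p then ((c:ℝ):ℂ) else 0 := by
    intro p; simp
  simp only [Matrix.trace, Matrix.diag, indD, Matrix.of_apply, h]
  rw [Finset.sum_ite, Finset.sum_const, Finset.sum_const_zero, add_zero, nsmul_eq_mul]
  simp

lemma indR_sq : indR P c * indR P c
    = ((((Finset.univ.filter P).card : ℝ) * c : ℝ) : ℂ) • indR P c := by
  ext p q
  simp only [Matrix.mul_apply, indR, Matrix.of_apply, Matrix.smul_apply, smul_eq_mul]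
  have h : ∀ r, ((if P p then (1:ℂ) else 0) * (if P r then 1 else 0) * ((c:ℝ):ℂ)) *
      ((if P r then 1 else 0) * (if P q then 1 else 0) * ((c:ℝ):ℂ))
      = (if P r then (1:ℂ) else 0) *
        ((if P p then (1:ℂ) else 0) * (if P q then 1 else 0) * (((c:ℝ):ℂ) * ((c:ℝ):ℂ))) := by
    intro r; split_ifs <;> ring
  rw [Finset.sum_congr rfl fun r _ => h r, ← Finset.sum_mul]
  have hs : ∑ r, (if P r then (1:ℂ) else 0) = ((Finset.univ.filter P).card : ℂ) := by
    rw [Finset.sum_ite, Finset.sum_const, Finset.sum_const_zero, add_zero, nsmul_eq_mul, mul_one]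
  rw [hs]
  push_cast
  ring

lemma indD_sq : indD P c * indD P c = ((c : ℝ) : ℂ) • indD P c := by
  ext p q
  simp only [Matrix.mul_apply, indD, Matrix.of_apply, Matrix.smul_apply, smul_eq_mul]
  rw [Finset.sum_eq_single p]
  · by_cases h : p = q ∧ P p
    · rw [if_pos ⟨rfl, h.2⟩, if_pos h]
    · rw [if_neg h, mul_zero, mul_zero]
  · intro r _ hr
    rw [if_neg (fun h => hr h.1.symm), zero_mul]
  · simp

end helper

/-- condition for the full state: a₁ = b and c = 0 -/
abbrev Pabc : ((Fin 2 × Fin 2) × Fin 2 × Fin 2) → Prop := fun p => p.1.1 = p.2.1 ∧ p.2.2 = 0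
/-- condition for the AB marginal: a₁ = b -/
abbrev Pab : ((Fin 2 × Fin 2) × Fin 2) → Prop := fun p => p.1.1 = p.2
/-- condition for the AC marginal diagonal: c = 0 -/
abbrev Pac : ((Fin 2 × Fin 2) × Fin 2) → Prop := fun p => p.2 = 0

/-- the AC marginal -/
noncomputable def rhoAC : Matrix ((Fin 2 × Fin 2) × Fin 2) ((Fin 2 × Fin 2) × Fin 2) ℂ :=
  Matrix.of fun p q => if p.1.1 = q.1.1 ∧ p.2 = 0 ∧ q.2 = 0 then ((1/4 : ℝ) : ℂ) else 0

lemma prod_ite_eq (x y : Prop) [Decidable x] [Decidable y] :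
    ((if x then (1:ℂ) else 0) * (if y then (1:ℂ) else 0) * ((1/4:ℝ):ℂ))
      = if x ∧ y then ((1/4:ℝ):ℂ) else 0 := by
  split_ifs <;> simp_all

lemma myIteAddIte (a b : Prop) [Decidable a] [Decidable b] (h : ¬(a ∧ b)) (c : ℂ) :
    (if a then c else 0) + (if b then c else 0) = if a ∨ b then c else 0 := by
  split_ifs <;> simp_all

lemma key1 : dephA (indR Pabc (1/4)) = indD Pabc (1/4) := by
  ext p q
  simp only [dephA, indR, indD, Matrix.of_apply, prod_ite_eq, ← ite_and]
  refine if_congr ?_ rfl rfl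
  obtain ⟨⟨a1, a2⟩, b, cc⟩ := p
  obtain ⟨⟨a1', a2'⟩, b', cc'⟩ := q
  revert a1 a2 b cc a1' a2' b' cc'
  decide

lemma key2 : (Matrix.of fun p q => ∑ cc, (indR Pabc (1/4)) (p.1, p.2, cc) (q.1, q.2, cc))
    = indR Pab (1/4) := by
  ext p q
  simp only [Matrix.of_apply, indR, Fin.sum_univ_two, prod_ite_eq]
  obtain ⟨⟨a1, a2⟩, b⟩ := p
  obtain ⟨⟨a1', a2'⟩, b'⟩ := q
  rw [myIteAddIte _ _ (by revert a1 a2 b a1' a2' b'; decide)]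
  refine if_congr ?_ rfl rfl
  revert a1 a2 b a1' a2' b'
  decide

lemma key3 : dephA (indR Pab (1/4)) = indD Pab (1/4) := by
  ext p q
  simp only [dephA, indR, indD, Matrix.of_apply, prod_ite_eq, ← ite_and]
  refine if_congr ?_ rfl rfl
  obtain ⟨⟨a1, a2⟩, b⟩ := p
  obtain ⟨⟨a1', a2'⟩, b'⟩ := q
  revert a1 a2 b a1' a2' b'
  decide

lemma key4 : (Matrix.of fun p q => ∑ m, (indR Pabc (1/4)) (p.1, m, p.2) (q.1, m, q.2))
    = rhoAC := by
  ext p q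
  simp only [Matrix.of_apply, indR, rhoAC, Fin.sum_univ_two, prod_ite_eq]
  obtain ⟨⟨a1, a2⟩, cc⟩ := p
  obtain ⟨⟨a1', a2'⟩, cc'⟩ := q
  rw [myIteAddIte _ _ (by revert a1 a2 cc a1' a2' cc'; decide)]
  refine if_congr ?_ rfl rfl
  revert a1 a2 cc a1' a2' cc'
  decide

lemma key5 : dephA rhoAC = indD Pac (1/4) := by
  ext p q
  simp only [dephA, rhoAC, indD, Matrix.of_apply, ← ite_and]
  refine if_congr ?_ rfl rfl
  obtain ⟨⟨a1, a2⟩, cc⟩ := p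
  obtain ⟨⟨a1', a2'⟩, cc'⟩ := q
  revert a1 a2 cc a1' a2' cc'
  decide

lemma rhoAC_herm : rhoAC.IsHermitian := by
  ext p q
  simp only [rhoAC, Matrix.conjTranspose_apply, Matrix.of_apply]
  rw [apply_ite star]
  simp only [star_zero, RCLike.star_def, Complex.conj_ofReal]
  refine if_congr ?_ rfl rfl
  constructor <;> rintro ⟨h1, h2, h3⟩ <;> exact ⟨h1.symm, h3, h2⟩

lemma rhoAC_trace : rhoAC.trace = 1 := by
  simp only [Matrix.trace, Matrix.diag, rhoAC, Matrix.of_apply]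
  rw [Fintype.sum_prod_type]
  simp [Fintype.sum_prod_type, Fin.sum_univ_two]

lemma rhoAC_sq : rhoAC * rhoAC = ((1/2 : ℝ) : ℂ) • rhoAC := by
  ext p q
  obtain ⟨⟨a1, a2⟩, cc⟩ := p
  obtain ⟨⟨a1', a2'⟩, cc'⟩ := q
  simp only [Matrix.mul_apply, rhoAC, Matrix.of_apply, Matrix.smul_apply, smul_eq_mul,
    Fintype.sum_prod_type, Fin.sum_univ_two]
  fin_cases a1 <;> fin_cases a1' <;> fin_cases cc <;> fin_cases cc' <;> simp <;> norm_num

/-- there exists a tripartite density operator (with A = A₁ ⊗ A₂ a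
two-qubit system, B and C qubits) such that
C^{A|BC}_r(ρ_ABC) < C^{A|B}_r(ρ_AB) + C^{A|C}_r(ρ_AC). -/
theorem exists_CrIQ_monogamy_violation :
    ∃ ρ : Matrix ((Fin 2 × Fin 2) × Fin 2 × Fin 2) ((Fin 2 × Fin 2) × Fin 2 × Fin 2) ℂ,
      ρ.PosSemidef ∧ ρ.trace = 1 ∧
      CrIQ ρ <
        CrIQ ((Matrix.of fun p q => ∑ c, ρ (p.1, p.2, c) (q.1, q.2, c)) :
            Matrix ((Fin 2 × Fin 2) × Fin 2) ((Fin 2 × Fin 2) × Fin 2) ℂ) +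
        CrIQ ((Matrix.of fun p q => ∑ m, ρ (p.1, m, p.2) (q.1, m, q.2)) :
            Matrix ((Fin 2 × Fin 2) × Fin 2) ((Fin 2 × Fin 2) × Fin 2) ℂ) := by
  refine ⟨indR Pabc (1/4), ?_, ?_, ?_⟩
  · -- positive semidefinite
    have hA : indR Pabc (1/4) =
        (Matrix.of fun (_ : Fin 1) q => (if Pabc q then 1 else 0) * ((1/2 : ℝ) : ℂ))ᴴ *
        (Matrix.of fun (_ : Fin 1) q => (if Pabc q then 1 else 0) * ((1/2 : ℝ) : ℂ)) := by
      ext p q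
      simp only [Matrix.mul_apply, Matrix.conjTranspose_apply, Matrix.of_apply, indR,
        Fin.sum_univ_one]
      split_ifs <;> simp <;> norm_num
    rw [hA]
    exact Matrix.posSemidef_conjTranspose_mul_self _
  · -- trace one
    rw [indR_trace]
    rw [show (Finset.univ.filter Pabc).card = 4 from by decide]
    norm_num
  · -- the strict inequality
    have card0 : (Finset.univ.filter Pabc).card = 4 := by decide
    have card1 : (Finset.univ.filter Pab).card = 4 := by decide
    have card2 : (Finset.univ.filter Pac).card = 4 := by decide
    -- entropies
    have h1 : vN (indR Pabc (1/4)) = - Real.log 1 := by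
      refine vN_special (indR_herm _ _) 1 ?_ ?_
      · have := indR_sq Pabc (1/4); rw [card0] at this; convert this using 2 <;> norm_num
      · rw [indR_trace, card0]; norm_num
    have h2 : vN (dephA (indR Pabc (1/4))) = - Real.log (1/4) := by
      rw [key1]
      refine vN_special (indD_herm _ _) (1/4) (indD_sq _ _) ?_
      rw [indD_trace, card0]; norm_num
    have h3 : vN (indR Pab (1/4)) = - Real.log 1 := by
      refine vN_special (indR_herm _ _) 1 ?_ ?_
      · have := indR_sq Pab (1/4); rw [card1] at this; convert this using 2 <;> norm_num
      · rw [indR_trace, card1]; norm_num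
    have h4 : vN (dephA (indR Pab (1/4))) = - Real.log (1/4) := by
      rw [key3]
      refine vN_special (indD_herm _ _) (1/4) (indD_sq _ _) ?_
      rw [indD_trace, card1]; norm_num
    have h5 : vN rhoAC = - Real.log (1/2) :=
      vN_special rhoAC_herm (1/2) rhoAC_sq rhoAC_trace
    have h6 : vN (dephA rhoAC) = - Real.log (1/4) := by
      rw [key5]
      refine vN_special (indD_herm _ _) (1/4) (indD_sq _ _) ?_
      rw [indD_trace, card2]; norm_num
    rw [CrIQ, CrIQ, CrIQ, key2, key4, h1, h2, h3, h4, h5, h6]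
    have hl2 : (0:ℝ) < Real.log 2 := Real.log_pos (by norm_num)
    have e4 : Real.log (1/4) = - (2 * Real.log 2) := by
      rw [show (1/4 : ℝ) = 2⁻¹ ^ 2 by norm_num, Real.log_pow, Real.log_inv]
      push_cast; ring
    have e2 : Real.log (1/2) = - Real.log 2 := by
      rw [show (1/2 : ℝ) = 2⁻¹ by norm_num, Real.log_inv]
    rw [e4, e2, Real.log_one]
    linarith

end everything
end
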